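/- Quantum teleportation correctness for measurement outcome 0: if the three-qubit state (ordered z,x,y) is α(1/√2)(|000⟩+|011⟩) + β(1/√2)(|100⟩+|111⟩), then after applying CNot to qubits (z,x), then H to z, the coefficient vector restricted to z=0, x=0 is (1/2)(α|0⟩ + β|1⟩) on the y component, so applying σ₀ = I to y yields the teleported state α|0⟩ + β|1⟩ up to normalization. -/

import Mathlib

/-- Initial three-qubit state (ordered z,x,y):
`α(1/√2)(|000⟩+|011⟩) + β(1/√2)(|100⟩+|111⟩)`. -/
noncomputable def psi (α β : ℂ) : Fin 2 × Fin 2 × Fin 2 → ℂ :=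
  fun p => (if p.1 = 0 then α else β) * ((1 / Real.sqrt 2 : ℝ) : ℂ) *
    (if p.2.1 = p.2.2 then 1 else 0)

/-- CNot on qubits (z,x): flip x when z = 1 (coefficient permutation). -/
def cnot12 (φ : Fin 2 × Fin 2 × Fin 2 → ℂ) : Fin 2 × Fin 2 × Fin 2 → ℂ :=
  fun p => φ (p.1, p.1 + p.2.1, p.2.2)

/-- Hadamard on the first qubit z. -/
noncomputable def h1 (φ : Fin 2 × Fin 2 × Fin 2 → ℂ) : Fin 2 × Fin 2 × Fin 2 → ℂ :=
  fun p => ((1 / Real.sqrt 2 : ℝ) : ℂ) *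
    (φ (0, p.2.1, p.2.2) + (if p.1 = 1 then -1 else 1) * φ (1, p.2.1, p.2.2))

theorem teleportation_outcome_zero (α β : ℂ) :
    h1 (cnot12 (psi α β)) (0, 0, 0) = α / 2 ∧
    h1 (cnot12 (psi α β)) (0, 0, 1) = β / 2 := by
  have h2 : ((Real.sqrt 2 : ℝ) : ℂ) * ((Real.sqrt 2 : ℝ) : ℂ) = 2 := by
    rw [← Complex.ofReal_mul, Real.mul_self_sqrt (by norm_num)]
    norm_num
  have hne : ((Real.sqrt 2 : ℝ) : ℂ) ≠ 0 := by
    simp [Real.sqrt_ne_zero']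
  constructor <;>
  · simp only [h1, cnot12, psi]
    norm_num
    field_simp
    ring_nf
    rw [sq, h2]
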